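/- Let d ≥ 1 and let W : ℝ^d → ℝ ∪ {+∞} be measurable and bounded below by a finite constant, such that the limit W_∞ := lim_{|x|→∞} W(x) exists (possibly +∞) and W is unstable, i.e. there exists ρ ∈ P(ℝ^d) with E(ρ) < (1/2)W_∞. Then there exists S > 0 such that W is unstable on P_S(ℝ^d), i.e. there exists ρ ∈ P_S(ℝ^d) with E(ρ) < (1/2)W_∞; consequently W is unstable on P_R(ℝ^d) for every R ≥ S. -/

import Mathlib

open MeasureTheory Filter Metric
open scoped ENNReal Topology

/-- `ℝ^d` with the Euclidean structure. -/
abbrev Ed (d : ℕ) : Type := EuclideanSpace ℝ (Fin d)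

/-- The positive part of an extended real number, as an element of `ℝ≥0∞`. -/
noncomputable def EReal.posPart (x : EReal) : ℝ≥0∞ := (x ⊔ 0).abs

/-- The integral of an `EReal`-valued function, defined as the difference (in `EReal`)
of the lower integrals of the positive and the negative parts. -/
noncomputable def eInt {α : Type*} [MeasurableSpace α] (μ : Measure α) (f : α → EReal) :
    EReal :=
  ((∫⁻ x, (f x).posPart ∂μ : ℝ≥0∞) : EReal) - ((∫⁻ x, (-f x).posPart ∂μ : ℝ≥0∞) : EReal)

/-- The interaction energy `E(ρ) = (1/2) ∬ W(x-y) dρ(x) dρ(y)`, with values in `EReal`. -/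
noncomputable def energy {d : ℕ} (W : Ed d → EReal) (ρ : Measure (Ed d)) : EReal :=
  ((1 / 2 : ℝ) : EReal) * eInt (ρ.prod ρ) (fun p => W (p.1 - p.2))

/-- The support of a measure: the set of points all of whose open neighbourhoods have
positive measure. -/
def msupport {α : Type*} [TopologicalSpace α] [MeasurableSpace α] (μ : Measure α) : Set α :=
  {x | ∀ U : Set α, IsOpen U → x ∈ U → 0 < μ U}

/-- `ρ ∈ P_R(ℝ^d)`: the support of `ρ` is contained in the closed ball `B̄(0,R)`. -/
def InBall {d : ℕ} (ρ : Measure (Ed d)) (R : ℝ) : Prop :=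
  msupport ρ ⊆ Metric.closedBall (0 : Ed d) R

/-- `ρ` is a global minimiser of the interaction energy on `P(ℝ^d)`. -/
def IsMinimiser {d : ℕ} (W : Ed d → EReal) (ρ : Measure (Ed d)) : Prop :=
  IsProbabilityMeasure ρ ∧
    ∀ μ : Measure (Ed d), IsProbabilityMeasure μ → energy W ρ ≤ energy W μ

/-- `ρ` is a global minimiser of the interaction energy on `P_R(ℝ^d)`. -/
def IsMinimiserOn {d : ℕ} (W : Ed d → EReal) (ρ : Measure (Ed d)) (R : ℝ) : Prop :=
  IsProbabilityMeasure ρ ∧ InBall ρ R ∧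
    ∀ μ : Measure (Ed d), IsProbabilityMeasure μ → InBall μ R → energy W ρ ≤ energy W μ


lemma aux_posPart_coe (p : ℝ) : EReal.posPart p = ENNReal.ofReal (max p 0) := by
  have h : ((p : EReal) ⊔ 0) = ((max p 0 : ℝ) : EReal) := by
    rcases le_total p 0 with h | h
    · have : (p:EReal) ≤ (0:EReal) := by exact_mod_cast h
      simp [max_eq_right h, sup_eq_right.2 this]
    · simp [max_eq_left h, sup_eq_left.2 (by exact_mod_cast h : (0:EReal) ≤ (p:EReal))]
  rw [EReal.posPart, h, EReal.abs_def, abs_of_nonneg (le_max_right _ _)]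

lemma aux_measurable_posPart : Measurable EReal.posPart := by
  apply EReal.measurable_of_measurable_real
  simp only [aux_posPart_coe]
  exact ENNReal.measurable_ofReal.comp (measurable_id.max measurable_const)

lemma aux_posPart_le {x : EReal} {r : ℝ} (hr : 0 ≤ r) (h : x ≤ (r : EReal)) :
    EReal.posPart x ≤ ENNReal.ofReal r := by
  have h0 : (0 : EReal) ≤ (r : EReal) := by exact_mod_cast hr
  rw [EReal.posPart]
  have main : ∀ y : EReal, (0 : EReal) ≤ y → y ≤ (r : EReal) → y.abs ≤ ENNReal.ofReal r := by
    intro y hy0 hy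
    induction y using EReal.rec with
    | bot => simp at hy0
    | coe y =>
        rw [EReal.abs_def, abs_of_nonneg (by exact_mod_cast hy0)]
        exact ENNReal.ofReal_le_ofReal (by exact_mod_cast hy)
    | top =>
        exfalso
        exact (lt_irrefl (⊤ : EReal)) (lt_of_le_of_lt hy (EReal.coe_lt_top r))
  exact main _ le_sup_right (sup_le h h0)

lemma aux_coe_ennreal_eq {a : ℝ≥0∞} (ha : a ≠ ⊤) :
    ((a : EReal)) = ((a.toReal : ℝ) : EReal) := by
  rw [← EReal.coe_toReal (x := (a : EReal)) (by simpa [EReal.coe_ennreal_eq_top_iff] using ha)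
    (EReal.coe_ennreal_ne_bot a), EReal.toReal_coe_ennreal]

lemma aux_tendsto_setLIntegral {α : Type*} [MeasurableSpace α] (μ : Measure α)
    {g : α → ℝ≥0∞} (hg : Measurable g) {s : ℕ → Set α} (hmono : Monotone s)
    (hms : ∀ n, MeasurableSet (s n)) (hu : ∀ x, ∃ n, x ∈ s n) :
    Tendsto (fun n => ∫⁻ x in s n, g x ∂μ) atTop (𝓝 (∫⁻ x, g x ∂μ)) := by
  have key : ∀ n, ∫⁻ x in s n, g x ∂μ = ∫⁻ x, (s n).indicator g x ∂μ := fun n =>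
    (lintegral_indicator (hms n) g).symm
  have hindm : ∀ n, Measurable ((s n).indicator g) := fun n => hg.indicator (hms n)
  have hindmono : Monotone fun n => (s n).indicator g := fun m n hmn x =>
    Set.indicator_le_indicator_of_subset (hmono hmn) (fun _ => zero_le) x
  have hsup : ∀ x, ⨆ n, (s n).indicator g x = g x := by
    intro x
    refine le_antisymm (iSup_le fun n => Set.indicator_le_self _ _ x) ?_
    obtain ⟨n, hn⟩ := hu x
    calc g x = (s n).indicator g x := (Set.indicator_of_mem hn g).symm
      _ ≤ _ := le_iSup (fun n => (s n).indicator g x) n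
  have hmono' : Monotone fun n => ∫⁻ x in s n, g x ∂μ := fun m n hmn => by
    simp only [key]; exact lintegral_mono fun x => hindmono hmn x
  have heq : (∫⁻ x, g x ∂μ) = ⨆ n, ∫⁻ x in s n, g x ∂μ := by
    simp_rw [key]
    rw [← lintegral_iSup hindm hindmono]
    congr 1; funext x; exact (hsup x).symm
  rw [heq]
  exact tendsto_atTop_iSup hmono'

lemma aux_prod_smul {α β : Type*} [MeasurableSpace α] [MeasurableSpace β]
    (μ : Measure α) (ν : Measure β) [IsFiniteMeasure μ] [IsFiniteMeasure ν]
    {c : ℝ≥0∞} (hc : c ≠ ⊤) :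
    (c • μ).prod (c • ν) = (c * c) • (μ.prod ν) := by
  haveI : IsFiniteMeasure (c • μ) :=
    ⟨by simpa [Measure.smul_apply] using ENNReal.mul_lt_top hc.lt_top (measure_lt_top μ _)⟩
  haveI : IsFiniteMeasure (c • ν) :=
    ⟨by simpa [Measure.smul_apply] using ENNReal.mul_lt_top hc.lt_top (measure_lt_top ν _)⟩
  refine Measure.prod_eq fun s t hs ht => ?_
  simp only [Measure.smul_apply, Measure.prod_prod, smul_eq_mul]
  ring

/-- **Lemma (instability at finite radius).** If `W` is measurable, bounded below by a
finite constant, the limit `W_∞` at infinity exists and `W` is unstable, then there exists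
`S > 0` such that `W` is unstable on `P_S(ℝ^d)`, and consequently on `P_R(ℝ^d)` for every
`R ≥ S`. -/
theorem instability_on_finite_ball
    {d : ℕ} (hd : 1 ≤ d) (W : Ed d → EReal) (hWmeas : Measurable W)
    (c : ℝ) (hbound : ∀ x, (c : EReal) ≤ W x)
    (Winf : EReal) (hlim : Tendsto W (cocompact (Ed d)) (nhds Winf))
    (hunst : ∃ ρ : Measure (Ed d), IsProbabilityMeasure ρ ∧
      energy W ρ < ((1 / 2 : ℝ) : EReal) * Winf) :
    ∃ S : ℝ, 0 < S ∧
      (∃ ρ : Measure (Ed d), IsProbabilityMeasure ρ ∧ InBall ρ S ∧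
        energy W ρ < ((1 / 2 : ℝ) : EReal) * Winf) ∧
      ∀ R : ℝ, S ≤ R → ∃ ρ : Measure (Ed d), IsProbabilityMeasure ρ ∧ InBall ρ R ∧
        energy W ρ < ((1 / 2 : ℝ) : EReal) * Winf := by
  classical
  obtain ⟨ρ, hρ, hlt⟩ := hunst
  haveI := hρ
  set f : Ed d × Ed d → EReal := fun p => W (p.1 - p.2) with hfdef
  have hfm : Measurable f := hWmeas.comp (measurable_fst.sub measurable_snd)
  have hgm : Measurable fun p => (f p).posPart := aux_measurable_posPart.comp hfm
  have hhm : Measurable fun p => (-f p).posPart := aux_measurable_posPart.comp hfm.neg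
  set π := ρ.prod ρ with hπdef
  haveI : IsProbabilityMeasure π := by rw [hπdef]; infer_instance
  set Pinf := ∫⁻ p, (f p).posPart ∂π with hPdef
  set Ninf := ∫⁻ p, (-f p).posPart ∂π with hNdef
  have henergy : energy W ρ = ((1 / 2 : ℝ) : EReal) * ((Pinf : EReal) - (Ninf : EReal)) := rfl
  have hbd : ∀ p : Ed d × Ed d, (-f p).posPart ≤ ENNReal.ofReal (max (-c) 0) := by
    intro p
    refine aux_posPart_le (le_max_right _ _) ?_
    have h1 : ((c : ℝ) : EReal) ≤ W (p.1 - p.2) := hbound _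
    have h2 : -f p ≤ ((-c : ℝ) : EReal) := by
      rw [EReal.coe_neg]
      exact EReal.neg_le_neg_iff.2 h1
    exact h2.trans (EReal.coe_le_coe_iff.2 (le_max_left _ _))
  have hNle : Ninf ≤ ENNReal.ofReal (max (-c) 0) := by
    calc Ninf ≤ ∫⁻ _, ENNReal.ofReal (max (-c) 0) ∂π := lintegral_mono hbd
      _ = ENNReal.ofReal (max (-c) 0) := by simp
  have hNne : Ninf ≠ ⊤ := (lt_of_le_of_lt hNle ENNReal.ofReal_lt_top).ne
  have hEne : energy W ρ ≠ ⊤ := (lt_of_lt_of_le hlt le_top).ne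
  have hhalf : (0 : EReal) < ((1 / 2 : ℝ) : EReal) := EReal.coe_pos.2 (by norm_num)
  have hPne : Pinf ≠ ⊤ := by
    intro hP
    apply hEne
    rw [henergy, hP, EReal.coe_ennreal_top, aux_coe_ennreal_eq hNne, EReal.top_sub_coe,
      EReal.mul_top_of_pos hhalf]
  -- the exhausting balls
  set B : ℕ → Set (Ed d) := fun n => Metric.closedBall (0 : Ed d) n with hBdef
  have hBmeas : ∀ n, MeasurableSet (B n) := fun n => measurableSet_closedBall
  have hBmono : Monotone B := fun m n hmn =>
    Metric.closedBall_subset_closedBall (by exact_mod_cast hmn)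
  have hBmem : ∀ x : Ed d, ∃ n : ℕ, x ∈ B n := fun x =>
    ⟨⌈dist x 0⌉₊, by simpa [hBdef, Metric.mem_closedBall] using Nat.le_ceil (dist x 0)⟩
  set T : ℕ → Set (Ed d × Ed d) := fun n => B n ×ˢ B n with hTdef
  have hTmeas : ∀ n, MeasurableSet (T n) := fun n => (hBmeas n).prod (hBmeas n)
  have hTmono : Monotone T := fun m n hmn => Set.prod_mono (hBmono hmn) (hBmono hmn)
  have hTmem : ∀ p : Ed d × Ed d, ∃ n, p ∈ T n := by
    intro p
    obtain ⟨m, hm⟩ := hBmem p.1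
    obtain ⟨k, hk⟩ := hBmem p.2
    exact ⟨max m k, ⟨hBmono (le_max_left _ _) hm, hBmono (le_max_right _ _) hk⟩⟩
  have ha : Tendsto (fun n => ρ (B n)) atTop (𝓝 1) := by
    have h1 := tendsto_measure_iUnion_atTop (μ := ρ) hBmono
    have h2 : ⋃ n, B n = Set.univ := Set.eq_univ_of_forall fun x => Set.mem_iUnion.2 (hBmem x)
    rw [h2, measure_univ] at h1
    exact h1
  have hP : Tendsto (fun n => ∫⁻ p in T n, (f p).posPart ∂π) atTop (𝓝 Pinf) :=
    aux_tendsto_setLIntegral π hgm hTmono hTmeas hTmem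
  have hN : Tendsto (fun n => ∫⁻ p in T n, (-f p).posPart ∂π) atTop (𝓝 Ninf) :=
    aux_tendsto_setLIntegral π hhm hTmono hTmeas hTmem
  have htR : Tendsto (fun n => (ρ (B n)).toReal) atTop (𝓝 1) := by
    have := (ENNReal.tendsto_toReal (by simp : (1 : ℝ≥0∞) ≠ ⊤)).comp ha
    simpa [Function.comp_def] using this
  have hpR : Tendsto (fun n => (∫⁻ p in T n, (f p).posPart ∂π).toReal) atTop
      (𝓝 Pinf.toReal) := (ENNReal.tendsto_toReal hPne).comp hP
  have hnR : Tendsto (fun n => (∫⁻ p in T n, (-f p).posPart ∂π).toReal) atTop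
      (𝓝 Ninf.toReal) := (ENNReal.tendsto_toReal hNne).comp hN
  set e : ℕ → ℝ := fun n => (1 / 2) *
      (((ρ (B n)).toReal)⁻¹ * ((ρ (B n)).toReal)⁻¹ * (∫⁻ p in T n, (f p).posPart ∂π).toReal
      - ((ρ (B n)).toReal)⁻¹ * ((ρ (B n)).toReal)⁻¹ *
        (∫⁻ p in T n, (-f p).posPart ∂π).toReal) with hedef
  have he : Tendsto e atTop (𝓝 ((1 / 2) * (Pinf.toReal - Ninf.toReal))) := by
    rw [hedef]
    have h1 : Tendsto (fun n => ((ρ (B n)).toReal)⁻¹) atTop (𝓝 1) := by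
      simpa using htR.inv₀ one_ne_zero
    have h2 := (((h1.mul h1).mul hpR).sub ((h1.mul h1).mul hnR)).const_mul (1 / 2 : ℝ)
    simpa using h2
  -- the normalized restricted measures
  have hkey : ∀ n : ℕ, ρ (B n) ≠ 0 →
      ∃ μ : Measure (Ed d), IsProbabilityMeasure μ ∧ InBall μ (n : ℝ) ∧
        energy W μ = ((e n : ℝ) : EReal) := by
    intro n hn0
    have hane : ρ (B n) ≠ ⊤ := (measure_lt_top ρ _).ne
    set cinv : ℝ≥0∞ := (ρ (B n))⁻¹ with hcinv
    have hcne : cinv ≠ ⊤ := by simp [hcinv, ENNReal.inv_ne_top, hn0]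
    set μ : Measure (Ed d) := cinv • ρ.restrict (B n) with hμdef
    haveI hμprob : IsProbabilityMeasure μ := ⟨by
      rw [hμdef, Measure.smul_apply, Measure.restrict_apply_univ, smul_eq_mul, hcinv,
        ENNReal.inv_mul_cancel hn0 hane]⟩
    have hball : InBall μ (n : ℝ) := by
      intro x hx
      by_contra hxB
      have hU : IsOpen (Metric.closedBall (0 : Ed d) (n : ℝ))ᶜ :=
        Metric.isClosed_closedBall.isOpen_compl
      have h0 : μ ((Metric.closedBall (0 : Ed d) (n : ℝ))ᶜ) = 0 := by
        rw [hμdef, Measure.smul_apply,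
          Measure.restrict_apply measurableSet_closedBall.compl]
        have hint : (Metric.closedBall (0 : Ed d) (n : ℝ))ᶜ ∩ B n = ∅ := by
          rw [hBdef]
          exact Set.compl_inter_self _
        rw [hint]
        simp
      exact (hx _ hU hxB).ne' h0
    have hprod : μ.prod μ = (cinv * cinv) • (π.restrict (T n)) := by
      rw [hμdef, aux_prod_smul _ _ hcne, Measure.prod_restrict]
    have hP1 : ∫⁻ p, (f p).posPart ∂(μ.prod μ)
        = (cinv * cinv) * ∫⁻ p in T n, (f p).posPart ∂π := by
      rw [hprod, lintegral_smul_measure, smul_eq_mul]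
    have hN1 : ∫⁻ p, (-f p).posPart ∂(μ.prod μ)
        = (cinv * cinv) * ∫⁻ p in T n, (-f p).posPart ∂π := by
      rw [hprod, lintegral_smul_measure, smul_eq_mul]
    have hPn_ne : (cinv * cinv) * (∫⁻ p in T n, (f p).posPart ∂π) ≠ ⊤ :=
      ENNReal.mul_ne_top (ENNReal.mul_ne_top hcne hcne)
        (lt_of_le_of_lt (setLIntegral_le_lintegral _ _) hPne.lt_top).ne
    have hNn_ne : (cinv * cinv) * (∫⁻ p in T n, (-f p).posPart ∂π) ≠ ⊤ :=
      ENNReal.mul_ne_top (ENNReal.mul_ne_top hcne hcne)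
        (lt_of_le_of_lt (setLIntegral_le_lintegral _ _) hNne.lt_top).ne
    refine ⟨μ, hμprob, hball, ?_⟩
    show ((1 / 2 : ℝ) : EReal) * eInt (μ.prod μ) f = ((e n : ℝ) : EReal)
    have h2 : eInt (μ.prod μ) f
        = (((cinv * cinv) * ∫⁻ p in T n, (f p).posPart ∂π : ℝ≥0∞) : EReal)
          - (((cinv * cinv) * ∫⁻ p in T n, (-f p).posPart ∂π : ℝ≥0∞) : EReal) := by
      simp only [eInt]
      rw [hP1, hN1]
    rw [h2, aux_coe_ennreal_eq hPn_ne, aux_coe_ennreal_eq hNn_ne, ← EReal.coe_sub,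
      ← EReal.coe_mul, EReal.coe_eq_coe_iff]
    rw [hedef]
    simp only [ENNReal.toReal_mul, hcinv, ENNReal.toReal_inv]
  have hev0 : ∀ᶠ n in atTop, ρ (B n) ≠ 0 := by
    have h1 := ha.eventually_const_lt (by norm_num : (1 / 2 : ℝ≥0∞) < 1)
    exact h1.mono fun n hn => (lt_of_lt_of_le (by norm_num : (0 : ℝ≥0∞) < 1 / 2) hn.le).ne'
  have htri : Winf = ⊥ ∨ Winf = ⊤ ∨ ∃ w : ℝ, Winf = (w : EReal) := by
    induction Winf using EReal.rec with
    | bot => exact Or.inl rfl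
    | coe w => exact Or.inr (Or.inr ⟨w, rfl⟩)
    | top => exact Or.inr (Or.inl rfl)
  rcases htri with hbot | htop | ⟨w, hw⟩
  · rw [hbot, EReal.mul_bot_of_pos hhalf] at hlt
    exact absurd hlt not_lt_bot
  · -- Winf = ⊤
    obtain ⟨n, hn0, hn1⟩ := (hev0.and (eventually_ge_atTop 1)).exists
    obtain ⟨μ, hμp, hμb, hμe⟩ := hkey n hn0
    have hSpos : (0 : ℝ) < (n : ℝ) := by exact_mod_cast Nat.lt_of_lt_of_le Nat.zero_lt_one hn1
    have hμlt : energy W μ < ((1 / 2 : ℝ) : EReal) * Winf := by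
      rw [htop, EReal.mul_top_of_pos hhalf, hμe]
      exact EReal.coe_lt_top _
    exact ⟨(n : ℝ), hSpos, ⟨μ, hμp, hμb, hμlt⟩, fun R hR =>
      ⟨μ, hμp, fun x hx => Metric.closedBall_subset_closedBall hR (hμb hx), hμlt⟩⟩
  · -- Winf = w real
    have hEρ : energy W ρ = (((1 / 2) * (Pinf.toReal - Ninf.toReal) : ℝ) : EReal) := by
      rw [henergy, aux_coe_ennreal_eq hPne, aux_coe_ennreal_eq hNne, ← EReal.coe_sub,
        ← EReal.coe_mul]
    have hlt' : (1 / 2) * (Pinf.toReal - Ninf.toReal) < (1 / 2) * w := by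
      have hcoe : (((1 / 2) * (Pinf.toReal - Ninf.toReal) : ℝ) : EReal)
          < (((1 / 2) * w : ℝ) : EReal) := by
        rw [← hEρ, EReal.coe_mul]
        rw [hw] at hlt
        exact hlt
      exact_mod_cast hcoe
    obtain ⟨n, ⟨hn0, hn1⟩, hne⟩ :=
      ((hev0.and (eventually_ge_atTop 1)).and (he.eventually_lt_const hlt')).exists
    obtain ⟨μ, hμp, hμb, hμe⟩ := hkey n hn0
    have hSpos : (0 : ℝ) < (n : ℝ) := by exact_mod_cast Nat.lt_of_lt_of_le Nat.zero_lt_one hn1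
    have hμlt : energy W μ < ((1 / 2 : ℝ) : EReal) * Winf := by
      rw [hw, hμe, show ((1 / 2 : ℝ) : EReal) * ((w : ℝ) : EReal)
        = (((1 / 2) * w : ℝ) : EReal) from (EReal.coe_mul _ _).symm]
      exact EReal.coe_lt_coe_iff.2 hne
    exact ⟨(n : ℝ), hSpos, ⟨μ, hμp, hμb, hμlt⟩, fun R hR =>
      ⟨μ, hμp, fun x hx => Metric.closedBall_subset_closedBall hR (hμb hx), hμlt⟩⟩
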